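/- Let n ≥ 2, let 1 ≤ r ≤ n-1, and let z_1, …, z_n be real numbers such that exactly r of them equal u and the remaining n-r equal v, where u, v are real numbers with ∑_{i=1}^n z_i = 0 (i.e. r·u + (n-r)·v = 0). Set p_2 = ∑_i z_i^2 and p_3 = ∑_i z_i^3. Then p_3^2 · r(n-r)n = (n-2r)^2 · p_2^3. -/
import Mathlib


open Finset

theorem two_valued_configuration_moment_identity
    (n r : ℕ) (hn : 2 ≤ n) (hr₁ : 1 ≤ r) (hr₂ : r ≤ n - 1)
    (u v : ℝ) (z : Fin n → ℝ) (S : Finset (Fin n)) (hS : S.card = r)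
    (hu : ∀ i ∈ S, z i = u) (hv : ∀ i ∉ S, z i = v)
    (hsum : ∑ i, z i = 0)
    (p₂ p₃ : ℝ) (hp₂ : p₂ = ∑ i, z i ^ 2) (hp₃ : p₃ = ∑ i, z i ^ 3) :
    p₃ ^ 2 * ((r : ℝ) * ((n : ℝ) - r) * n) = ((n : ℝ) - 2 * r) ^ 2 * p₂ ^ 3 := by
  have hrn : r < n := lt_of_le_of_lt hr₂ (Nat.sub_lt (by omega) one_pos)
  have hcardc : Sᶜ.card = n - r := by
    rw [card_compl, hS, Fintype.card_fin]
  have key : ∀ k : ℕ, ∑ i, z i ^ k = (r : ℝ) * u ^ k + ((n : ℝ) - r) * v ^ k := by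
    intro k
    rw [← Finset.sum_add_sum_compl S]
    have h1 : ∑ i ∈ S, z i ^ k = (r : ℝ) * u ^ k := by
      rw [Finset.sum_congr rfl (fun i hi => by rw [hu i hi]), Finset.sum_const, hS,
        nsmul_eq_mul]
    have h2 : ∑ i ∈ Sᶜ, z i ^ k = ((n : ℝ) - r) * v ^ k := by
      rw [Finset.sum_congr rfl (fun i hi => by rw [hv i (Finset.mem_compl.mp hi)]),
        Finset.sum_const, hcardc, nsmul_eq_mul, Nat.cast_sub hrn.le]
    rw [h1, h2]
  have hb : (0:ℝ) < (n : ℝ) - r := by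
    have : (r : ℝ) < n := by exact_mod_cast hrn
    linarith
  have hsum' : (r : ℝ) * u + ((n : ℝ) - r) * v = 0 := by
    have := key 1
    simp only [pow_one] at this
    rw [← this]; exact hsum.symm ▸ hsum
  have hv' : v = -((r : ℝ) * u) / ((n : ℝ) - r) := by
    field_simp
    linarith
  rw [hp₂, hp₃, key 2, key 3, hv']
  field_simp
  ring
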